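/- No critical points in the right forbidden region: under the stated hypotheses, W'(x) ≠ 0 for all x > √λ. -/

import Mathlib

open Filter Real

/-- No critical points of the Weber function in the right forbidden region. -/
theorem weber_no_critical_point_right_forbidden_region
    (lam : ℝ) (hlam1 : 1 < lam) (hlam2 : lam < 2)
    (W : ℝ → ℝ) (hW : ContDiff ℝ 2 W)
    (hWeq : ∀ x, deriv (deriv W) x = (x ^ 2 - lam) * W x)
    (hWpos : ∀ x ≤ (3 : ℝ), 0 < W x)
    (hWlim : Tendsto W atTop atBot) :
    ∀ x > Real.sqrt lam, deriv W x ≠ 0 := by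
  -- basic differentiability facts
  have hWd : Differentiable ℝ W := hW.differentiable (by norm_num)
  have hdWd : Differentiable ℝ (deriv W) := by
    have h2 : ContDiff ℝ ((1 : WithTop ℕ∞) + 1) W := by exact_mod_cast hW
    exact (contDiff_succ_iff_deriv.mp h2).2.2.differentiable (by norm_num)
  have hWc : Continuous W := hWd.continuous
  have hsqrtpos : 0 < Real.sqrt lam := Real.sqrt_pos.mpr (by linarith)
  have hsqlt : ∀ y : ℝ, Real.sqrt lam < y → lam < y ^ 2 := by
    intro y hy
    exact (Real.sqrt_lt' (lt_trans hsqrtpos hy)).mp hy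
  have hsl3 : Real.sqrt lam < 3 := by
    rw [show (3:ℝ) = Real.sqrt 9 by
      rw [show (9:ℝ) = 3^2 by norm_num, Real.sqrt_sq (by norm_num)]]
    exact Real.sqrt_lt_sqrt (by linarith) (by linarith)
  -- monotonicity of deriv W on intervals where W has a sign
  have hmono' : ∀ a b : ℝ, Real.sqrt lam < a → (∀ y ∈ Set.Icc a b, 0 ≤ W y) →
      MonotoneOn (deriv W) (Set.Icc a b) := by
    intro a b ha hWnn
    apply monotoneOn_of_deriv_nonneg (convex_Icc a b) hdWd.continuous.continuousOn
      hdWd.differentiableOn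
    intro y hy
    rw [interior_Icc] at hy
    rw [hWeq]
    have h1 : lam < y ^ 2 := hsqlt y (lt_trans ha hy.1)
    have h2 : 0 ≤ W y := hWnn y ⟨le_of_lt hy.1, le_of_lt hy.2⟩
    nlinarith
  have hanti' : ∀ a b : ℝ, Real.sqrt lam < a → (∀ y ∈ Set.Icc a b, W y ≤ 0) →
      AntitoneOn (deriv W) (Set.Icc a b) := by
    intro a b ha hWnp
    apply antitoneOn_of_deriv_nonpos (convex_Icc a b) hdWd.continuous.continuousOn
      hdWd.differentiableOn
    intro y hy
    rw [interior_Icc] at hy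
    rw [hWeq]
    have h1 : lam < y ^ 2 := hsqlt y (lt_trans ha hy.1)
    have h2 : W y ≤ 0 := hWnp y ⟨le_of_lt hy.1, le_of_lt hy.2⟩
    nlinarith
  intro x0 hx0 hW'0
  have hx0pos : 0 < x0 := lt_trans hsqrtpos hx0
  rcases lt_trichotomy (W x0) 0 with hc | hc | hc
  · -- Case B : W x0 < 0, hence x0 > 3; contradiction on [3, x0]
    have h3x0 : (3:ℝ) < x0 := by
      by_contra h
      exact absurd (hWpos x0 (le_of_not_gt h)) (not_lt.mpr (le_of_lt hc))
    have hW3 : 0 < W 3 := hWpos 3 le_rfl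
    -- last zero of W in [3, x0]
    have hIVT : ∃ s ∈ Set.Icc (3:ℝ) x0, W s = 0 := by
      have h0 : (0:ℝ) ∈ Set.Icc (W x0) (W 3) := ⟨le_of_lt hc, le_of_lt hW3⟩
      obtain ⟨s, hs, hWs⟩ := intermediate_value_Icc' (le_of_lt h3x0) hWc.continuousOn h0
      exact ⟨s, hs, hWs⟩
    set S : Set ℝ := Set.Icc (3:ℝ) x0 ∩ W ⁻¹' {0} with hSdef
    have hSne : S.Nonempty := by
      obtain ⟨s, hs, hWs⟩ := hIVT; exact ⟨s, hs, hWs⟩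
    have hSclosed : IsClosed S :=
      isClosed_Icc.inter (isClosed_singleton.preimage hWc)
    have hSbdd : BddAbove S := ⟨x0, fun y hy => hy.1.2⟩
    set s := sSup S with hsdef
    have hsS : s ∈ S := hSclosed.csSup_mem hSne hSbdd
    have hWs : W s = 0 := hsS.2
    have hsx0 : s < x0 := lt_of_le_of_ne hsS.1.2 (by
      intro h; rw [h] at hWs; linarith)
    -- W ≤ 0 on [s, x0]
    have hWneg : ∀ y ∈ Set.Icc s x0, W y ≤ 0 := by
      intro y hy
      by_contra h
      push_neg at h
      rcases eq_or_lt_of_le hy.1 with rfl | hsy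
      · linarith
      · -- W y > 0, W x0 < 0, zero in [y, x0], above s: contradiction
        have h0 : (0:ℝ) ∈ Set.Icc (W x0) (W y) := ⟨le_of_lt hc, le_of_lt h⟩
        obtain ⟨z, hz, hWz⟩ := intermediate_value_Icc' hy.2 hWc.continuousOn h0
        have hzS : z ∈ S := ⟨⟨le_trans (le_trans hsS.1.1 (le_of_lt hsy)) hz.1, hz.2⟩, hWz⟩
        have : z ≤ s := le_csSup hSbdd hzS
        linarith [hz.1]
    have hs3 : Real.sqrt lam < s := lt_of_lt_of_le hsl3 hsS.1.1
    have hantis := hanti' s x0 hs3 hWneg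
    -- deriv W ≥ 0 on [s, x0], so W monotone there
    have hW'nn : ∀ y ∈ Set.Icc s x0, 0 ≤ deriv W y := by
      intro y hy
      have := hantis hy (Set.right_mem_Icc.mpr (le_of_lt hsx0)) hy.2
      rw [hW'0] at this
      exact this
    have hWmono : MonotoneOn W (Set.Icc s x0) := by
      apply monotoneOn_of_deriv_nonneg (convex_Icc s x0) hWc.continuousOn
        hWd.differentiableOn
      intro y hy
      rw [interior_Icc] at hy
      exact hW'nn y ⟨le_of_lt hy.1, le_of_lt hy.2⟩
    have := hWmono (Set.left_mem_Icc.mpr (le_of_lt hsx0))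
      (Set.right_mem_Icc.mpr (le_of_lt hsx0)) (le_of_lt hsx0)
    rw [hWs] at this
    linarith
  · -- Case C : W x0 = 0; energy/Gronwall argument gives W ≡ 0 on [x0, ∞)
    have hx03 : (3:ℝ) < x0 := by
      by_contra h
      have := hWpos x0 (le_of_not_gt h)
      linarith
    have hzero : ∀ T ≥ x0, W T = 0 := by
      intro T hT
      set K : ℝ := T ^ 2 + 1 with hK
      set ψ : ℝ → ℝ := fun x => ((W x) ^ 2 + (deriv W x) ^ 2) * Real.exp (-(K * x)) with hψ
      have hψd : ∀ y : ℝ, HasDerivAt ψ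
          ((2 * W y ^ 1 * deriv W y + 2 * deriv W y ^ 1 * ((y ^ 2 - lam) * W y)) *
              Real.exp (-(K * y)) +
            ((W y) ^ 2 + (deriv W y) ^ 2) * (Real.exp (-(K * y)) * (-K))) y := by
        intro y
        have h1 : HasDerivAt (fun x => (W x) ^ 2 + (deriv W x) ^ 2)
            (2 * W y ^ 1 * deriv W y + 2 * deriv W y ^ 1 * ((y ^ 2 - lam) * W y)) y := by
          have hA := ((hWd y).hasDerivAt).pow 2
          have hB := ((hdWd y).hasDerivAt).pow 2
          rw [hWeq y] at hB
          have hAB := hA.add hB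
          simp at hAB ⊢
          exact hAB
        have h2 : HasDerivAt (fun x : ℝ => Real.exp (-(K * x)))
            (Real.exp (-(K * y)) * (-K)) y := by
          have : HasDerivAt (fun x : ℝ => -(K * x)) (-K) y := by
            have hN := ((hasDerivAt_id y).const_mul K).neg
            simp at hN ⊢
            exact hN
          exact this.exp
        exact h1.mul h2
      have hψanti : AntitoneOn ψ (Set.Icc x0 T) := by
        apply antitoneOn_of_deriv_nonpos (convex_Icc x0 T)
          (fun y _ => ((hψd y).differentiableAt).continuousAt.continuousWithinAt)
          (fun y _ => ((hψd y).differentiableAt).differentiableWithinAt)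
        intro y hy
        rw [interior_Icc] at hy
        rw [(hψd y).deriv]
        have hE : 0 < Real.exp (-(K * y)) := Real.exp_pos _
        have hy2 : lam < y ^ 2 := hsqlt y (lt_trans hx0 hy.1)
        have hyT : y ^ 2 ≤ T ^ 2 := by nlinarith [hy.2, lt_trans hx0pos hy.1]
        set a := W y
        set b := deriv W y
        have key : (2 * a ^ 1 * b + 2 * b ^ 1 * ((y ^ 2 - lam) * a)) +
            (a ^ 2 + b ^ 2) * (-K) ≤ 0 := by
          have h1 : 0 ≤ (1 + y ^ 2 - lam) * (a - b) ^ 2 := by nlinarith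
          have h2 : 0 ≤ (K - (1 + y ^ 2 - lam)) * (a ^ 2 + b ^ 2) := by nlinarith
          nlinarith
        calc (2 * a ^ 1 * b + 2 * b ^ 1 * ((y ^ 2 - lam) * a)) * Real.exp (-(K * y)) +
              (a ^ 2 + b ^ 2) * (Real.exp (-(K * y)) * (-K))
            = ((2 * a ^ 1 * b + 2 * b ^ 1 * ((y ^ 2 - lam) * a)) +
                (a ^ 2 + b ^ 2) * (-K)) * Real.exp (-(K * y)) := by ring
          _ ≤ 0 := mul_nonpos_of_nonpos_of_nonneg key (le_of_lt hE)
      have hψ0 : ψ x0 = 0 := by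
        simp [hψ, hc, hW'0]
      have := hψanti (Set.left_mem_Icc.mpr hT) (Set.right_mem_Icc.mpr hT) hT
      rw [hψ0] at this
      have hE : 0 < Real.exp (-(K * T)) := Real.exp_pos _
      have hφT : (W T) ^ 2 + (deriv W T) ^ 2 ≤ 0 := by
        by_contra h
        push_neg at h
        have : 0 < ψ T := mul_pos h hE
        linarith
      nlinarith [sq_nonneg (W T), sq_nonneg (deriv W T)]
    obtain ⟨x, hx1, hx2⟩ := ((hWlim.eventually (eventually_lt_atBot (0:ℝ))).and
      (eventually_ge_atTop x0)).exists
    have := hzero x hx2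
    linarith
  · -- Case A : W x0 > 0; W stays positive and nondecreasing, contradicting W → -∞
    -- Step 1: W > 0 on [x0, ∞)
    have hWpos' : ∀ x ≥ x0, 0 < W x := by
      intro b hb
      by_contra h
      push_neg at h
      -- first zero of W in [x0, b]
      have hIVT : ∃ s ∈ Set.Icc x0 b, W s = 0 := by
        have h0 : (0:ℝ) ∈ Set.Icc (W b) (W x0) := ⟨h, le_of_lt hc⟩
        obtain ⟨s, hs, hWs⟩ := intermediate_value_Icc' hb hWc.continuousOn h0
        exact ⟨s, hs, hWs⟩
      set S : Set ℝ := Set.Icc x0 b ∩ W ⁻¹' {0} with hSdef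
      have hSne : S.Nonempty := by
        obtain ⟨s, hs, hWs⟩ := hIVT; exact ⟨s, hs, hWs⟩
      have hSclosed : IsClosed S :=
        isClosed_Icc.inter (isClosed_singleton.preimage hWc)
      have hSbdd : BddBelow S := ⟨x0, fun y hy => hy.1.1⟩
      set s := sInf S with hsdef
      have hsS : s ∈ S := hSclosed.csInf_mem hSne hSbdd
      have hWs : W s = 0 := hsS.2
      have hx0s : x0 < s := lt_of_le_of_ne hsS.1.1 (by
        intro h'; rw [← h'] at hWs; linarith)
      -- W ≥ 0 on [x0, s]
      have hWnn : ∀ y ∈ Set.Icc x0 s, 0 ≤ W y := by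
        intro y hy
        by_contra h'
        push_neg at h'
        have h0 : (0:ℝ) ∈ Set.Icc (W y) (W x0) := ⟨le_of_lt h', le_of_lt hc⟩
        obtain ⟨z, hz, hWz⟩ := intermediate_value_Icc' hy.1 hWc.continuousOn h0
        have hzS : z ∈ S := ⟨⟨hz.1, le_trans hz.2 (le_trans hy.2 hsS.1.2)⟩, hWz⟩
        have hsz : s ≤ z := csInf_le hSbdd hzS
        have hyS : y ≠ s := by intro h''; rw [h''] at h'; linarith
        have : y < s := lt_of_le_of_ne hy.2 hyS
        linarith [hz.2]
      have hmonos := hmono' x0 s hx0 hWnn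
      have hW'nn : ∀ y ∈ Set.Icc x0 s, 0 ≤ deriv W y := by
        intro y hy
        have := hmonos (Set.left_mem_Icc.mpr (le_of_lt hx0s)) hy hy.1
        rw [hW'0] at this
        exact this
      have hWmono : MonotoneOn W (Set.Icc x0 s) := by
        apply monotoneOn_of_deriv_nonneg (convex_Icc x0 s) hWc.continuousOn
          hWd.differentiableOn
        intro y hy
        rw [interior_Icc] at hy
        exact hW'nn y ⟨le_of_lt hy.1, le_of_lt hy.2⟩
      have := hWmono (Set.left_mem_Icc.mpr (le_of_lt hx0s))
        (Set.right_mem_Icc.mpr (le_of_lt hx0s)) (le_of_lt hx0s)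
      rw [hWs] at this
      linarith
    -- Step 2: deriv W ≥ 0 on [x0, ∞)
    have hW'nn : ∀ x ≥ x0, 0 ≤ deriv W x := by
      intro x hx
      have hWnn : ∀ y ∈ Set.Icc x0 x, 0 ≤ W y := fun y hy => le_of_lt (hWpos' y hy.1)
      have := hmono' x0 x hx0 hWnn (Set.left_mem_Icc.mpr hx) (Set.right_mem_Icc.mpr hx) hx
      rw [hW'0] at this
      exact this
    -- Step 3: W monotone on [x0, ∞)
    have hWmono : MonotoneOn W (Set.Ici x0) := by
      apply monotoneOn_of_deriv_nonneg (convex_Ici x0) hWc.continuousOn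
        hWd.differentiableOn
      intro y hy
      rw [interior_Ici] at hy
      exact hW'nn y (le_of_lt hy)
    obtain ⟨x, hx1, hx2⟩ := ((hWlim.eventually (eventually_lt_atBot (W x0))).and
      (eventually_ge_atTop x0)).exists
    have := hWmono (Set.self_mem_Ici) hx2 hx2
    linarith
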